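/- If a forward complete C^2 system ẋ = f(t,x) on R^n is contractive (i.e., there exist k, λ > 0 such that every solution δx of the linearized equation δ̇x = J_f(t, x(t)) δx along any solution x(·) satisfies |δx(t)| ≤ k e^{-λ(t-t0)} |δx(t0)| for all t ≥ t0), then the system is incrementally exponentially stable: for any two solutions x1, x2 and all t ≥ t0, |x1(t) - x2(t)| ≤ k e^{-λ(t-t0)} |x1(t0) - x2(t0)|. -/

import Mathlib

open Set Filter Metric intervalIntegral MeasureTheory Real
open scoped Interval

lemma step_integral_bound {E : Type*} [NormedAddCommGroup E] [NormedSpace ℝ E]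
    {F : ℝ → E} (hF : Continuous F) (t1 t c : ℝ) (p : ℕ) (hc : 0 ≤ c)
    (hb : ∀ s ∈ Set.uIcc t1 t, ‖F s‖ ≤ c * |s - t1| ^ p / p.factorial) :
    ‖∫ s in t1..t, F s‖ ≤ c * |t - t1| ^ (p + 1) / (p + 1).factorial := by
  have hfact : (0:ℝ) < p.factorial := by exact_mod_cast p.factorial_pos
  have hfact1 : (0:ℝ) < (p+1).factorial := by exact_mod_cast (p+1).factorial_pos
  rcases le_total t1 t with h | h
  · have hbound : ∀ s ∈ Ι t1 t, ‖F s‖ ≤ c * (s - t1) ^ p / p.factorial := by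
      intro s hs
      rw [uIoc_of_le h] at hs
      have := hb s (by rw [uIcc_of_le h]; exact ⟨hs.1.le, hs.2⟩)
      rwa [abs_of_nonneg (by linarith [hs.1.le] : (0:ℝ) ≤ s - t1)] at this
    have hint : IntervalIntegrable (fun s => c * (s - t1) ^ p / p.factorial) volume t1 t := by
      apply Continuous.intervalIntegrable; continuity
    have h1 := intervalIntegral.norm_integral_le_abs_of_norm_le
      (f := F) (μ := volume) (a := t1) (b := t)
      (ae_restrict_of_forall_mem measurableSet_uIoc hbound) hint
    refine h1.trans ?_
    have h2 : (∫ s in t1..t, c * (s - t1) ^ p / p.factorial)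
        = c * (t - t1) ^ (p + 1) / (p + 1).factorial := by
      have he : (fun s => c * (s - t1) ^ p / (p.factorial:ℝ))
          = fun s => (c / p.factorial) * ((fun u => u ^ p) (s - t1)) := by
        funext s; ring
      rw [he, intervalIntegral.integral_const_mul,
        intervalIntegral.integral_comp_sub_right (fun u => u ^ p) t1, sub_self, integral_pow,
        Nat.factorial_succ]
      rw [zero_pow p.succ_ne_zero, sub_zero]
      push_cast
      rw [div_mul_div_comm, div_eq_div_iff (by positivity) (by positivity)]
      ring
    rw [h2, abs_of_nonneg, abs_of_nonneg (by linarith : (0:ℝ) ≤ t - t1)]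
    exact div_nonneg (mul_nonneg hc (pow_nonneg (by linarith) _)) hfact1.le
  · have hbound : ∀ s ∈ Ι t1 t, ‖F s‖ ≤ c * (t1 - s) ^ p / p.factorial := by
      intro s hs
      rw [uIoc_of_ge h] at hs
      have := hb s (by rw [uIcc_of_ge h]; exact ⟨hs.1.le, hs.2⟩)
      rwa [abs_of_nonpos (by linarith [hs.2] : s - t1 ≤ 0), neg_sub] at this
    have hint : IntervalIntegrable (fun s => c * (t1 - s) ^ p / p.factorial) volume t1 t := by
      apply Continuous.intervalIntegrable; continuity
    have h1 := intervalIntegral.norm_integral_le_abs_of_norm_le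
      (f := F) (μ := volume) (a := t1) (b := t)
      (ae_restrict_of_forall_mem measurableSet_uIoc hbound) hint
    refine h1.trans ?_
    have h2 : (∫ s in t1..t, c * (t1 - s) ^ p / p.factorial)
        = - (c * (t1 - t) ^ (p + 1) / (p + 1).factorial) := by
      have he : (fun s => c * (t1 - s) ^ p / (p.factorial:ℝ))
          = fun s => (c / p.factorial) * ((fun u => u ^ p) (t1 - s)) := by
        funext s; ring
      rw [he, intervalIntegral.integral_const_mul,
        intervalIntegral.integral_comp_sub_left (fun u => u ^ p) t1, sub_self, integral_pow,
        Nat.factorial_succ]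
      push_cast
      rw [div_mul_div_comm, ← neg_div, div_eq_div_iff (by positivity) (by positivity)]
      ring
    rw [h2, abs_neg, abs_of_nonneg, abs_of_nonpos (by linarith : t - t1 ≤ 0), neg_sub]
    exact div_nonneg (mul_nonneg hc (pow_nonneg (by linarith) _)) hfact1.le

/-- Global existence for linear ODEs with continuous coefficient. -/
theorem lin_exists {E : Type*} [NormedAddCommGroup E] [NormedSpace ℝ E] [CompleteSpace E]
    (B : ℝ → E →L[ℝ] E) (hB : Continuous B) (t1 : ℝ) (v : E) :
    ∃ δ : ℝ → E, δ t1 = v ∧ ∀ t, HasDerivAt δ (B t (δ t)) t := by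
  classical
  -- Picard iteration
  let seq : ℕ → ℝ → E := fun m => Nat.rec (fun _ => v)
    (fun _ g t => v + ∫ s in t1..t, B s (g s)) m
  have hseqS : ∀ m t, seq (m+1) t = v + ∫ s in t1..t, B s (seq m s) := fun m t => rfl
  have hcont : ∀ m, Continuous (seq m) := by
    intro m; induction m with
    | zero => exact continuous_const
    | succ m ih =>
      have hInt : Continuous fun s => B s (seq m s) := hB.clm_apply ih
      exact continuous_const.add
        (intervalIntegral.continuous_primitive (fun a b => hInt.intervalIntegrable a b) t1)
  have hIntc : ∀ m, Continuous fun s => B s (seq m s) := fun m => hB.clm_apply (hcont m)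
  -- bound on compact intervals
  have key : ∀ (b C : ℝ), 0 ≤ b → 0 ≤ C → (∀ s ∈ Icc (t1 - b) (t1 + b), ‖B s‖ ≤ C) →
      ∀ m, ∀ t ∈ Icc (t1 - b) (t1 + b),
        ‖seq (m+1) t - seq m t‖ ≤ ‖v‖ * C ^ (m+1) * |t - t1| ^ (m+1) / (m+1).factorial := by
    intro b C hb0 hC hCb
    have ht1 : t1 ∈ Icc (t1 - b) (t1 + b) := by constructor <;> linarith
    intro m
    induction m with
    | zero =>
      intro t ht
      have huIcc : uIcc t1 t ⊆ Icc (t1 - b) (t1 + b) := uIcc_subset_Icc ht1 ht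
      have heq1 : seq (0+1) t - seq 0 t = ∫ s in t1..t, B s v := by
        rw [hseqS 0 t]; show v + _ - v = _; abel
      rw [heq1]
      have hbd : ∀ s ∈ uIcc t1 t, ‖B s v‖ ≤ (‖v‖ * C ^ 1) * |s - t1| ^ 0 / (0).factorial := by
        intro s hs
        simp only [pow_zero, Nat.factorial_zero, Nat.cast_one, mul_one, div_one]
        calc ‖B s v‖ ≤ ‖B s‖ * ‖v‖ := (B s).le_opNorm v
          _ ≤ C * ‖v‖ := by
            have := hCb s (huIcc hs)
            nlinarith [norm_nonneg v]
          _ = ‖v‖ * C ^ 1 := by rw [pow_one]; ring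
      have := step_integral_bound (hB.clm_apply continuous_const) t1 t (‖v‖ * C ^ 1) 0
        (by positivity) hbd
      simpa using this
    | succ m ih =>
      intro t ht
      have huIcc : uIcc t1 t ⊆ Icc (t1 - b) (t1 + b) := uIcc_subset_Icc ht1 ht
      have hdiff : seq (m+1+1) t - seq (m+1) t
          = ∫ s in t1..t, (B s (seq (m+1) s) - B s (seq m s)) := by
        rw [hseqS (m+1) t, hseqS m t,
          intervalIntegral.integral_sub ((hIntc (m+1)).intervalIntegrable _ _)
            ((hIntc m).intervalIntegrable _ _)]
        abel
      rw [hdiff]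
      have hFc : Continuous fun s => B s (seq (m+1) s) - B s (seq m s) :=
        (hIntc (m+1)).sub (hIntc m)
      have hbd : ∀ s ∈ uIcc t1 t, ‖B s (seq (m+1) s) - B s (seq m s)‖
          ≤ (‖v‖ * C ^ (m+2)) * |s - t1| ^ (m+1) / (m+1).factorial := by
        intro s hs
        have hsmem := huIcc hs
        have h1 : B s (seq (m+1) s) - B s (seq m s) = B s (seq (m+1) s - seq m s) := by
          rw [map_sub]
        rw [h1]
        calc ‖B s (seq (m+1) s - seq m s)‖ ≤ ‖B s‖ * ‖seq (m+1) s - seq m s‖ :=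
              (B s).le_opNorm _
          _ ≤ C * (‖v‖ * C ^ (m+1) * |s - t1| ^ (m+1) / (m+1).factorial) := by
              apply mul_le_mul (hCb s hsmem) (ih s hsmem) (norm_nonneg _) hC
          _ = ‖v‖ * C ^ (m+2) * |s - t1| ^ (m+1) / (m+1).factorial := by ring
      have := step_integral_bound hFc t1 t (‖v‖ * C ^ (m+2)) (m+1) (by positivity) hbd
      have hnn : m + 1 + 1 = m + 2 := rfl
      rw [hnn]
      exact this
  -- bound on each compact interval, with constant
  have exC : ∀ b : ℝ, 0 ≤ b → ∃ C : ℝ, 0 ≤ C ∧ ∀ s ∈ Icc (t1 - b) (t1 + b), ‖B s‖ ≤ C := by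
    intro b hb
    obtain ⟨C, hC⟩ := isCompact_Icc.exists_bound_of_continuousOn
      (hB.continuousOn (s := Icc (t1 - b) (t1 + b)))
    exact ⟨max C 0, le_max_right _ _, fun s hs => (hC s hs).trans (le_max_left _ _)⟩
  -- summable majorant for each compact interval
  have dmaj : ∀ (r : ℝ), 0 ≤ r → Summable (fun m : ℕ => ‖v‖ * (r ^ (m+1) / (m+1).factorial)) ∧
      Tendsto (fun i => ∑' j, ‖v‖ * (r ^ (j + i + 1) / (j + i + 1).factorial)) atTop (nhds 0) := by
    intro r hr
    have hs : Summable (fun m : ℕ => r ^ m / m.factorial) := Real.summable_pow_div_factorial r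
    have hs1 : Summable (fun m : ℕ => r ^ (m+1) / (m+1).factorial) := by
      have := hs.comp_injective (add_left_injective 1)
      exact this
    have hsv : Summable (fun m : ℕ => ‖v‖ * (r ^ (m+1) / (m+1).factorial)) := hs1.mul_left _
    refine ⟨hsv, ?_⟩
    have := tendsto_sum_nat_add (f := fun m : ℕ => ‖v‖ * (r ^ (m+1) / (m+1).factorial))
    simpa using this
  -- pointwise Cauchy
  have hdist : ∀ (b C : ℝ), 0 ≤ b → 0 ≤ C → (∀ s ∈ Icc (t1 - b) (t1 + b), ‖B s‖ ≤ C) →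
      ∀ m, ∀ t ∈ Icc (t1 - b) (t1 + b),
      dist (seq m t) (seq (m+1) t) ≤ ‖v‖ * ((C * b) ^ (m+1) / (m+1).factorial) := by
    intro b C hb hC hCb m t ht
    rw [dist_comm, dist_eq_norm]
    refine (key b C hb hC hCb m t ht).trans ?_
    have h1 : |t - t1| ≤ b := by
      rw [abs_le]; constructor <;> [linarith [ht.1]; linarith [ht.2] ]
    calc ‖v‖ * C ^ (m+1) * |t - t1| ^ (m+1) / (m+1).factorial
        ≤ ‖v‖ * C ^ (m+1) * b ^ (m+1) / (m+1).factorial := by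
          gcongr
      _ = ‖v‖ * ((C * b) ^ (m+1) / (m+1).factorial) := by rw [mul_pow]; ring
  have hcauchy : ∀ t, CauchySeq (fun m => seq m t) := by
    intro t
    obtain ⟨C, hC, hCb⟩ := exC |t - t1| (abs_nonneg _)
    have htmem : t ∈ Icc (t1 - |t - t1|) (t1 + |t - t1|) := by
      constructor <;> [linarith [neg_abs_le (t - t1)]; linarith [le_abs_self (t - t1)] ]
    exact cauchySeq_of_dist_le_of_summable _
      (fun m => hdist _ C (abs_nonneg _) hC hCb m t htmem)
      (dmaj (C * |t - t1|) (by positivity)).1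
  -- the limit function
  let δ : ℝ → E := fun t => limUnder atTop (fun m => seq m t)
  have htend : ∀ t, Tendsto (fun m => seq m t) atTop (nhds (δ t)) := fun t =>
    (hcauchy t).tendsto_limUnder
  -- uniform tail bound on compact intervals
  have htail : ∀ (b C : ℝ), 0 ≤ b → 0 ≤ C → (∀ s ∈ Icc (t1 - b) (t1 + b), ‖B s‖ ≤ C) →
      ∀ m, ∀ t ∈ Icc (t1 - b) (t1 + b),
      dist (seq m t) (δ t) ≤ ∑' j, ‖v‖ * ((C * b) ^ (j + m + 1) / (j + m + 1).factorial) := by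
    intro b C hb hC hCb m t ht
    have := dist_le_tsum_of_dist_le_of_tendsto
      (f := fun m => seq m t) (fun m => ‖v‖ * ((C * b) ^ (m+1) / (m+1).factorial))
      (fun m => hdist b C hb hC hCb m t ht) (dmaj (C * b) (by positivity)).1 (htend t) m
    refine this.trans (le_of_eq ?_)
    exact tsum_congr fun j => by rw [add_comm m j]
  -- δ is continuous
  have hδcont : Continuous δ := by
    rw [continuous_iff_continuousAt]
    intro t
    set b := |t - t1| + 1 with hbdef
    have hb : 0 ≤ b := by positivity
    obtain ⟨C, hC, hCb⟩ := exC b hb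
    have huc : TendstoUniformlyOn (fun m s => seq m s) δ atTop (Icc (t1 - b) (t1 + b)) := by
      rw [Metric.tendstoUniformlyOn_iff]
      intro ε hε
      have h0 := (dmaj (C * b) (by positivity)).2
      have : ∀ᶠ i in atTop,
          (∑' j, ‖v‖ * ((C * b) ^ (j + i + 1) / (j + i + 1).factorial)) < ε :=
        h0.eventually (eventually_lt_nhds hε)
      filter_upwards [this] with m hm s hs
      rw [dist_comm]
      exact lt_of_le_of_lt (htail b C hb hC hCb m s hs) hm
    have hco : ContinuousOn δ (Icc (t1 - b) (t1 + b)) :=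
      huc.continuousOn (Filter.Frequently.of_forall fun m => (hcont m).continuousOn)
    have hmem : Icc (t1 - b) (t1 + b) ∈ nhds t := by
      apply Icc_mem_nhds
      · have := neg_abs_le (t - t1); simp only [hbdef]; linarith
      · have := le_abs_self (t - t1); simp only [hbdef]; linarith
    exact hco.continuousAt hmem
  have hδInt : Continuous fun s => B s (δ s) := hB.clm_apply hδcont
  -- integral equation
  have heq : ∀ t, δ t = v + ∫ s in t1..t, B s (δ s) := by
    intro t
    set b := |t - t1| with hbdef
    have hb : 0 ≤ b := abs_nonneg _
    obtain ⟨C, hC, hCb⟩ := exC b hb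
    have htmem : t ∈ Icc (t1 - b) (t1 + b) := by
      constructor <;> [linarith [neg_abs_le (t - t1)]; linarith [le_abs_self (t - t1)] ]
    have huIcc : uIcc t1 t ⊆ Icc (t1 - b) (t1 + b) :=
      uIcc_subset_Icc (by constructor <;> linarith) htmem
    have h1 : Tendsto (fun m => seq (m+1) t) atTop (nhds (δ t)) :=
      (htend t).comp (tendsto_add_atTop_nat 1)
    have h2 : Tendsto (fun m => seq (m+1) t) atTop (nhds (v + ∫ s in t1..t, B s (δ s))) := by
      have hsub : ∀ m : ℕ, ‖seq (m+1) t - (v + ∫ s in t1..t, B s (δ s))‖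
          ≤ C * (∑' j, ‖v‖ * ((C * b) ^ (j + m + 1) / (j + m + 1).factorial)) * b := by
        intro m
        have hdiffeq : seq (m+1) t - (v + ∫ s in t1..t, B s (δ s))
            = ∫ s in t1..t, (B s (seq m s) - B s (δ s)) := by
          rw [hseqS m t, intervalIntegral.integral_sub ((hIntc m).intervalIntegrable _ _)
            (hδInt.intervalIntegrable _ _)]
          abel
        rw [hdiffeq]
        set tail := ∑' j, ‖v‖ * ((C * b) ^ (j + m + 1) / (j + m + 1).factorial) with htaildef
        have htail0 : 0 ≤ tail := by
          apply tsum_nonneg; intro j; positivity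
        have hbd : ∀ s ∈ Ι t1 t, ‖B s (seq m s) - B s (δ s)‖ ≤ C * tail := by
          intro s hs
          have hsmem : s ∈ Icc (t1 - b) (t1 + b) := huIcc (uIoc_subset_uIcc hs)
          rw [← map_sub]
          calc ‖B s (seq m s - δ s)‖ ≤ ‖B s‖ * ‖seq m s - δ s‖ := (B s).le_opNorm _
            _ ≤ C * tail := by
                apply mul_le_mul (hCb s hsmem) ?_ (norm_nonneg _) hC
                rw [← dist_eq_norm]
                exact htail b C hb hC hCb m s hsmem
        have := intervalIntegral.norm_integral_le_of_norm_le_const hbd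
        refine this.trans ?_
        have : |t - t1| ≤ b := le_of_eq hbdef.symm
        nlinarith [abs_nonneg (t - t1)]
      rw [tendsto_iff_norm_sub_tendsto_zero]
      have hmaj : Tendsto (fun m : ℕ =>
          C * (∑' j, ‖v‖ * ((C * b) ^ (j + m + 1) / (j + m + 1).factorial)) * b)
          atTop (nhds 0) := by
        have h0 := (dmaj (C * b) (by positivity)).2
        have := (h0.const_mul C).mul_const b
        simpa using this
      exact squeeze_zero_norm (fun m => by simpa using hsub m) hmaj
    exact tendsto_nhds_unique h1 h2
  refine ⟨δ, ?_, ?_⟩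
  · rw [heq t1, intervalIntegral.integral_same, add_zero]
  · intro t
    have H : HasDerivAt (fun u => v + ∫ s in t1..u, B s (δ s)) (B t (δ t)) t := by
      have := intervalIntegral.integral_hasDerivAt_right
        (hδInt.intervalIntegrable t1 t)
        (hδInt.stronglyMeasurable.stronglyMeasurableAtFilter)
        hδInt.continuousAt
      exact this.const_add v
    exact H.congr_of_eventuallyEq (Filter.Eventually.of_forall heq)

/-- The partial derivative in the second variable, as a composition with `inr`. -/
lemma hasFDerivAt_partial {E F : Type*} [NormedAddCommGroup E] [NormedSpace ℝ E]
    [NormedAddCommGroup F] [NormedSpace ℝ F]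
    {G : ℝ × E → F} (hG : Differentiable ℝ G) (t : ℝ) (x : E) :
    HasFDerivAt (fun y => G (t, y))
      ((fderiv ℝ G (t, x)).comp (ContinuousLinearMap.inr ℝ ℝ E)) x :=
  (hG (t, x)).hasFDerivAt.comp x (HasFDerivAt.prodMk (hasFDerivAt_const t x) (hasFDerivAt_id x))

lemma norm_comp_inr_le {E F : Type*} [NormedAddCommGroup E] [NormedSpace ℝ E]
    [NormedAddCommGroup F] [NormedSpace ℝ F]
    (T : (ℝ × E) →L[ℝ] F) : ‖T.comp (ContinuousLinearMap.inr ℝ ℝ E)‖ ≤ ‖T‖ := by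
  apply ContinuousLinearMap.opNorm_le_bound _ (norm_nonneg T)
  intro x
  have h1 : ‖(ContinuousLinearMap.inr ℝ ℝ E) x‖ = ‖x‖ := by
    simp [Prod.norm_def]
  calc ‖T ((ContinuousLinearMap.inr ℝ ℝ E) x)‖ ≤ ‖T‖ * ‖(ContinuousLinearMap.inr ℝ ℝ E) x‖ :=
        T.le_opNorm _
    _ = ‖T‖ * ‖x‖ := by rw [h1]

lemma gronwallBound_linear (K ε x : ℝ) :
    gronwallBound 0 K ε x = ε * gronwallBound 0 K 1 x := by
  rcases eq_or_ne K 0 with h | h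
  · rw [h, gronwallBound_K0, gronwallBound_K0]; simp only [zero_mul, zero_add]; ring
  · rw [gronwallBound_of_K_ne_0 h, gronwallBound_of_K_ne_0 h]
    simp only [zero_mul, zero_add]; ring

lemma gronwallBound_one_nonneg {K x : ℝ} (hK : 0 ≤ K) (hx : 0 ≤ x) :
    0 ≤ gronwallBound 0 K 1 x := by
  rcases eq_or_ne K 0 with h | h
  · rw [h, gronwallBound_K0]; simpa using hx
  · rw [gronwallBound_of_K_ne_0 h]
    have hKpos : 0 < K := lt_of_le_of_ne hK (Ne.symm h)
    have : (1:ℝ) ≤ Real.exp (K * x) := by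
      rw [← Real.exp_zero]
      exact Real.exp_le_exp.mpr (by positivity)
    have h2 : 0 ≤ Real.exp (K * x) - 1 := by linarith
    have := div_nonneg (le_of_lt (lt_of_lt_of_le one_pos this)) hKpos.le
    simp only [zero_mul, zero_add]
    positivity

section Loc

variable {n : ℕ}
local notation "E" => EuclideanSpace ℝ (Fin n)

set_option maxHeartbeats 1000000 in
/-- The key local estimate. -/
theorem loc_est
    {f : ℝ → E → E}
    (hf : ContDiff ℝ 2 (Function.uncurry f))
    {k lam : ℝ} (hk : 0 < k)
    (hcontr : ∀ (t0 : ℝ) (x δ : ℝ → E),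
      (∀ t, t0 ≤ t → HasDerivAt x (f t (x t)) t) →
      (∀ t, t0 ≤ t → HasDerivAt δ ((fderiv ℝ (f t) (x t)) (δ t)) t) →
      ∀ t, t0 ≤ t → ‖δ t‖ ≤ k * Real.exp (-lam * (t - t0)) * ‖δ t0‖)
    (t0 T : ℝ) (hT : t0 ≤ T)
    (y : ℝ → E) (hy : ∀ t, t0 ≤ t → HasDerivAt y (f t (y t)) t) :
    ∃ h0 > 0, ∃ C ≥ 0, ∀ z : ℝ → E, (∀ t, t0 ≤ t → HasDerivAt z (f t (z t)) t) →
      ‖z t0 - y t0‖ ≤ h0 →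
      ‖z T - y T‖ ≤ k * Real.exp (-lam * (T - t0)) * ‖z t0 - y t0‖
        + C * ‖z t0 - y t0‖ ^ 2 := by
  classical
  have hfd : Differentiable ℝ (Function.uncurry f) := hf.differentiable (by norm_num)
  set A : ℝ × E → E →L[ℝ] E :=
    fun p => (fderiv ℝ (Function.uncurry f) p).comp (ContinuousLinearMap.inr ℝ ℝ E) with hAdef
  have hApartial : ∀ t x, HasFDerivAt (f t) (A (t, x)) x := fun t x =>
    hasFDerivAt_partial hfd t x
  have hAfderiv : ∀ t x, fderiv ℝ (f t) x = A (t, x) := fun t x => (hApartial t x).fderiv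
  have hAcont : Continuous A :=
    (hf.continuous_fderiv (by norm_num)).clm_comp continuous_const
  set G : ℝ × E → (ℝ × E) →L[ℝ] E := fderiv ℝ (Function.uncurry f) with hGdef
  have hG1 : ContDiff ℝ 1 G := hf.fderiv_right (le_refl 2)
  have hGd : Differentiable ℝ G := hG1.differentiable (by norm_num)
  have hG'cont : Continuous (fderiv ℝ G) := hG1.continuous_fderiv (by norm_num)
  -- continuity of y
  have hycont : ContinuousOn y (Ici t0) := fun t ht =>
    ((hy t ht).continuousAt).continuousWithinAt
  -- the compact tube
  set Kc : Set (ℝ × E) :=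
    (fun q : ℝ × E => (q.1, y q.1 + q.2)) '' ((Icc t0 T) ×ˢ closedBall (0:E) 1) with hKcdef
  have hKcomp : IsCompact Kc := by
    apply (isCompact_Icc.prod (isCompact_closedBall _ _)).image_of_continuousOn
    apply ContinuousOn.prodMk continuousOn_fst
    exact ((hycont.comp continuousOn_fst (fun q hq => hq.1.1)).add continuousOn_snd)
  have memKc : ∀ t x, t ∈ Icc t0 T → ‖x - y t‖ ≤ 1 → (t, x) ∈ Kc := by
    intro t x ht hx
    exact ⟨(t, x - y t), ⟨ht, by simpa [mem_closedBall, dist_eq_norm] using hx⟩, by simp⟩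
  -- bounds on the tube
  obtain ⟨L0, hL0⟩ := hKcomp.exists_bound_of_continuousOn hAcont.continuousOn
  obtain ⟨M0, hM0⟩ := hKcomp.exists_bound_of_continuousOn (f := fderiv ℝ G) (by exact hG'cont.continuousOn)
  set L : ℝ := max L0 0 with hLdef
  set M : ℝ := max M0 0 with hMdef
  have hL : 0 ≤ L := le_max_right _ _
  have hM : 0 ≤ M := le_max_right _ _
  have hAle : ∀ p ∈ Kc, ‖A p‖ ≤ L := fun p hp => (hL0 p hp).trans (le_max_left _ _)
  have hG'le : ∀ p ∈ Kc, ‖fderiv ℝ G p‖ ≤ M := fun p hp => (hM0 p hp).trans (le_max_left _ _)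
  -- Lipschitz bound of f t on the ball
  have lipf : ∀ t ∈ Icc t0 T, ∀ u ∈ closedBall (y t) 1, ∀ w ∈ closedBall (y t) 1,
      ‖f t w - f t u‖ ≤ L * ‖w - u‖ := by
    intro t ht u hu w hw
    apply (convex_closedBall (y t) 1).norm_image_sub_le_of_norm_hasFDerivWithin_le
      (fun x hx => (hApartial t x).hasFDerivWithinAt)
      (fun x hx => hAle (t, x) (memKc t x ht (by rwa [← mem_closedBall_iff_norm]))) hu hw
  -- Lipschitz bound of A (t, ·) on the ball
  have lipA : ∀ t ∈ Icc t0 T, ∀ u ∈ closedBall (y t) 1, ∀ w ∈ closedBall (y t) 1,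
      ‖A (t, w) - A (t, u)‖ ≤ M * ‖w - u‖ := by
    intro t ht u hu w hw
    have h1 : A (t, w) - A (t, u) = (G (t, w) - G (t, u)).comp (ContinuousLinearMap.inr ℝ ℝ E) := by
      rw [hAdef]
      ext x
      simp [ContinuousLinearMap.sub_comp]
    rw [h1]
    refine (norm_comp_inr_le _).trans ?_
    have hlip : ‖(fun x => G (t, x)) w - (fun x => G (t, x)) u‖ ≤ M * ‖w - u‖ := by
      apply (convex_closedBall (y t) 1).norm_image_sub_le_of_norm_hasFDerivWithin_le
        (fun x hx => (hasFDerivAt_partial hGd t x).hasFDerivWithinAt)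
        (fun x hx => ?_) hu hw
      exact (norm_comp_inr_le _).trans
        (hG'le (t, x) (memKc t x ht (by rwa [← mem_closedBall_iff_norm])))
    exact hlip
  -- Taylor bound
  have taylor : ∀ t ∈ Icc t0 T, ∀ u ∈ closedBall (y t) 1, ∀ w ∈ closedBall (y t) 1,
      ‖f t w - f t u - A (t, u) (w - u)‖ ≤ M * ‖w - u‖ * ‖w - u‖ := by
    intro t ht u hu w hw
    have hseg : segment ℝ u w ⊆ closedBall (y t) 1 :=
      (convex_closedBall (y t) 1).segment_subset hu hw
    have hsegnorm : ∀ x ∈ segment ℝ u w, ‖x - u‖ ≤ ‖w - u‖ := by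
      intro x hx
      obtain ⟨a, b, ha, hb, hab, rfl⟩ := hx
      have : a • u + b • w - u = b • (w - u) := by
        have ha1 : a = 1 - b := by linarith
        rw [ha1]; module
      rw [this, norm_smul]
      simp only [Real.norm_eq_abs, abs_of_nonneg hb]
      nlinarith [norm_nonneg (w - u)]
    have hbound : ∀ x ∈ segment ℝ u w, ‖A (t, x) - A (t, u)‖ ≤ M * ‖w - u‖ := by
      intro x hx
      calc ‖A (t, x) - A (t, u)‖ ≤ M * ‖x - u‖ := lipA t ht u hu x (hseg hx)
        _ ≤ M * ‖w - u‖ := mul_le_mul_of_nonneg_left (hsegnorm x hx) hM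
    exact (convex_segment u w).norm_image_sub_le_of_norm_hasFDerivWithin_le'
      (fun x hx => (hApartial t x).hasFDerivWithinAt) hbound
      (left_mem_segment ℝ u w) (right_mem_segment ℝ u w)
  -- constants
  set Dl := T - t0 with hDldef
  have hDl : 0 ≤ Dl := by rw [hDldef]; linarith
  set eL : ℝ := Real.exp (L * Dl) with heLdef
  have heL1 : 1 ≤ eL := by
    rw [heLdef, ← Real.exp_zero]; exact Real.exp_le_exp.mpr (by positivity)
  have heLpos : 0 < eL := lt_of_lt_of_le one_pos heL1
  set h0 : ℝ := 1 / (2 * eL) with hh0def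
  have hh0pos : 0 < h0 := by positivity
  set gB1 := gronwallBound 0 L 1 Dl with hgB1def
  have hgB1 : 0 ≤ gB1 := gronwallBound_one_nonneg hL hDl
  set C : ℝ := M * eL ^ 2 * gB1 with hCdef
  have hC : 0 ≤ C := by positivity
  refine ⟨h0, hh0pos, C, hC, ?_⟩
  intro z hz hzh
  set h := ‖z t0 - y t0‖ with hhdef
  have hh0' : 0 ≤ h := norm_nonneg _
  have hzcont : ContinuousOn z (Ici t0) := fun t ht =>
    ((hz t ht).continuousAt).continuousWithinAt
  -- the time-dependent set for the ODE comparison lemma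
  set sset : ℝ → Set E := fun t => if t ∈ Icc t0 T then closedBall (y t) 1 else (∅ : Set E)
    with hssetdef
  have hLcoe : (L.toNNReal : ℝ) = L := Real.coe_toNNReal _ hL
  have hlipOn : ∀ t, LipschitzOnWith L.toNNReal (f t) (sset t) := by
    intro t
    by_cases ht : t ∈ Icc t0 T
    · rw [hssetdef]; simp only [if_pos ht]
      apply LipschitzOnWith.of_dist_le_mul
      intro a ha b hb
      rw [dist_eq_norm, dist_eq_norm, hLcoe]
      exact lipf t ht b hb a ha
    · rw [hssetdef]; simp only [if_neg ht]
      exact lipschitzOnWith_empty _ _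
  -- the Gronwall comparison, valid as long as z stays in the tube
  have gr : ∀ τ ∈ Icc t0 T, (∀ u ∈ Icc t0 τ, dist (z u) (y u) ≤ 1) →
      ∀ t ∈ Icc t0 τ, dist (z t) (y t) ≤ h * Real.exp (L * (t - t0)) := by
    intro τ hτ htube t ht
    have hIccsub : Icc t0 τ ⊆ Ici t0 := fun u hu => hu.1
    have hmemz : ∀ u ∈ Ico t0 τ, z u ∈ sset u := by
      intro u hu
      have huT : u ∈ Icc t0 T := ⟨hu.1, hu.2.le.trans hτ.2⟩
      rw [hssetdef]; simp only [if_pos huT]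
      exact mem_closedBall.mpr (htube u ⟨hu.1, hu.2.le⟩)
    have hmemy : ∀ u ∈ Ico t0 τ, y u ∈ sset u := by
      intro u hu
      have huT : u ∈ Icc t0 T := ⟨hu.1, hu.2.le.trans hτ.2⟩
      rw [hssetdef]; simp only [if_pos huT]
      exact mem_closedBall_self one_pos.le
    have := dist_le_of_trajectories_ODE_of_mem (v := f) (s := sset) (K := L.toNNReal)
      (fun t _ => hlipOn t)
      (hzcont.mono hIccsub)
      (fun u hu => (hz u hu.1).hasDerivWithinAt)
      hmemz
      (hycont.mono hIccsub)
      (fun u hu => (hy u hu.1).hasDerivWithinAt)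
      hmemy
      (le_of_eq (dist_eq_norm _ _))
      t ht
    rwa [hLcoe] at this
  -- continuous induction: z stays in the tube on [t0, T]
  have tube : ∀ u ∈ Icc t0 T, dist (z u) (y u) ≤ 1 := by
    set S : Set ℝ := {τ | ∀ u ∈ Icc t0 τ, dist (z u) (y u) ≤ 1} with hSdef
    have hh0le : h ≤ 1 := by
      have : h0 ≤ 1 := by
        rw [hh0def]
        rw [div_le_one (by positivity)]
        linarith
      linarith [hzh]
    suffices hsub : Icc t0 T ⊆ S by
      intro u hu; exact hsub hu u ⟨hu.1, le_rfl⟩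
    apply IsClosed.Icc_subset_of_forall_exists_gt
    · -- closedness
      apply IsSeqClosed.isClosed
      intro ξ τ hmem hlim
      have hτIcc : τ ∈ Icc t0 T := isClosed_Icc.isSeqClosed (fun j => (hmem j).2) hlim
      refine ⟨fun u hu => ?_, hτIcc⟩
      rcases eq_or_lt_of_le hu.2 with rfl | hu2
      · by_cases hex : ∃ j, u ≤ ξ j
        · obtain ⟨j, hj⟩ := hex
          exact (hmem j).1 u ⟨hu.1, hj⟩
        · push_neg at hex
          have hqc : ContinuousAt (fun s => dist (z s) (y s)) u :=
            ((hz u hu.1).continuousAt).dist ((hy u hu.1).continuousAt)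
          refine le_of_tendsto (hqc.tendsto.comp hlim) ?_
          exact Filter.Eventually.of_forall fun j =>
            (hmem j).1 (ξ j) ⟨(hmem j).2.1, le_rfl⟩
      · obtain ⟨j, hj⟩ : ∃ j, u ≤ ξ j := by
          have : ∀ᶠ j in atTop, u < ξ j := hlim.eventually (eventually_gt_nhds hu2)
          exact this.exists.imp fun j hj => hj.le
        exact (hmem j).1 u ⟨hu.1, hj⟩
    · -- t0 ∈ S
      intro u hu
      have hut0 : u = t0 := le_antisymm hu.2 hu.1
      rw [hut0, dist_eq_norm]
      exact hh0le
    · -- can always extend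
      rintro τ ⟨hτS, hτIco⟩ b hb
      have hbound := gr τ ⟨hτIco.1, hτIco.2.le⟩ hτS
      have hτb : dist (z τ) (y τ) ≤ h * Real.exp (L * (τ - t0)) :=
        hbound τ ⟨hτIco.1, le_rfl⟩
      have hlt1 : dist (z τ) (y τ) < 1 := by
        have hexple : Real.exp (L * (τ - t0)) ≤ eL := by
          rw [heLdef]
          apply Real.exp_le_exp.mpr
          apply mul_le_mul_of_nonneg_left _ hL
          rw [hDldef]; linarith [hτIco.2]
        have h1 : h * Real.exp (L * (τ - t0)) ≤ h0 * eL :=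
          mul_le_mul hzh hexple (Real.exp_pos _).le hh0pos.le
        have h2 : h0 * eL = 1/2 := by
          rw [hh0def]; field_simp
        linarith
      have hqc : ContinuousAt (fun s => dist (z s) (y s)) τ :=
        ((hz τ hτIco.1).continuousAt).dist ((hy τ hτIco.1).continuousAt)
      have hev : ∀ᶠ s in nhds τ, dist (z s) (y s) < 1 :=
        hqc.tendsto.eventually (eventually_lt_nhds hlt1)
      obtain ⟨ε, hε, hball⟩ := Metric.eventually_nhds_iff.mp hev
      refine ⟨min (τ + ε/2) b, ?_, ?_⟩
      · -- ∈ S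
        intro u hu
        rcases le_or_gt u τ with h' | h'
        · exact hτS u ⟨hu.1, h'⟩
        · apply le_of_lt
          apply hball
          rw [Real.dist_eq, abs_of_pos (by linarith : (0:ℝ) < u - τ)]
          have : u ≤ τ + ε/2 := hu.2.trans (min_le_left _ _)
          linarith
      · -- ∈ Ioc τ b
        constructor
        · apply lt_min (by linarith) hb
        · exact min_le_right _ _
  have hgron : ∀ t ∈ Icc t0 T, dist (z t) (y t) ≤ h * Real.exp (L * (t - t0)) :=
    gr T ⟨hT, le_rfl⟩ tube
  have hbound2 : ∀ t ∈ Icc t0 T, ‖z t - y t‖ ≤ h * eL := by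
    intro t ht
    rw [← dist_eq_norm]
    refine (hgron t ht).trans ?_
    apply mul_le_mul_of_nonneg_left _ hh0'
    rw [heLdef]
    apply Real.exp_le_exp.mpr
    apply mul_le_mul_of_nonneg_left _ hL
    rw [hDldef]; linarith [ht.2]
  -- the variational solution
  set B : ℝ → E →L[ℝ] E := fun t => A (max t t0, y (max t t0)) with hBdef
  have hBcont : Continuous B := by
    apply hAcont.comp
    apply Continuous.prodMk (continuous_id.max continuous_const)
    exact hycont.comp_continuous (continuous_id.max continuous_const)
      (fun t => le_max_right t t0)
  obtain ⟨dl, hdl0, hdld⟩ := lin_exists B hBcont t0 (z t0 - y t0)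
  have hBeq : ∀ t, t0 ≤ t → B t = A (t, y t) := by
    intro t ht
    rw [hBdef]
    simp only [max_eq_left ht]
  have hdld' : ∀ t, t0 ≤ t → HasDerivAt dl ((fderiv ℝ (f t) (y t)) (dl t)) t := by
    intro t ht
    have h1 := hdld t
    rw [hBeq t ht] at h1
    rw [hAfderiv]
    exact h1
  have hdlT := hcontr t0 y dl hy hdld' T hT
  rw [hdl0] at hdlT
  -- the error term
  have hdlcont : Continuous dl := by
    rw [continuous_iff_continuousAt]; exact fun t => (hdld t).continuousAt
  set w : ℝ → E := fun t => z t - y t - dl t with hwdef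
  have hw0 : w t0 = 0 := by rw [hwdef]; simp [hdl0]
  have hIccsub : Icc t0 T ⊆ Ici t0 := fun u hu => hu.1
  have hwcont : ContinuousOn w (Icc t0 T) :=
    ((hzcont.mono hIccsub).sub (hycont.mono hIccsub)).sub hdlcont.continuousOn
  have hwd : ∀ t ∈ Ico t0 T,
      HasDerivWithinAt w (f t (z t) - f t (y t) - A (t, y t) (dl t)) (Ici t) t := by
    intro t ht
    have h1 := (hz t ht.1).sub (hy t ht.1)
    have h2 : HasDerivAt dl (A (t, y t) (dl t)) t := by
      have := hdld t; rwa [hBeq t ht.1] at this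
    exact (h1.sub h2).hasDerivWithinAt
  set eps : ℝ := M * (h * eL)^2 with hepsdef
  have hbound3 : ∀ t ∈ Ico t0 T,
      ‖f t (z t) - f t (y t) - A (t, y t) (dl t)‖ ≤ L * ‖w t‖ + eps := by
    intro t ht
    have htIcc : t ∈ Icc t0 T := ⟨ht.1, ht.2.le⟩
    have hzt : z t ∈ closedBall (y t) 1 := mem_closedBall.mpr (tube t htIcc)
    have hyt : y t ∈ closedBall (y t) 1 := mem_closedBall_self one_pos.le
    have hR := taylor t htIcc (y t) hyt (z t) hzt
    have hsplit : f t (z t) - f t (y t) - A (t, y t) (dl t)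
        = A (t, y t) (w t) + (f t (z t) - f t (y t) - A (t, y t) (z t - y t)) := by
      rw [hwdef]
      simp only [map_sub]
      abel
    rw [hsplit]
    have hyKc : (t, y t) ∈ Kc := memKc t (y t) htIcc (by simp)
    have hA1 : ‖A (t, y t) (w t)‖ ≤ L * ‖w t‖ :=
      le_trans ((A (t, y t)).le_opNorm _)
        (mul_le_mul_of_nonneg_right (hAle _ hyKc) (norm_nonneg _))
    have hzyb : ‖z t - y t‖ ≤ h * eL := hbound2 t htIcc
    have hR2 : ‖f t (z t) - f t (y t) - A (t, y t) (z t - y t)‖ ≤ eps := by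
      refine hR.trans ?_
      have hn : (0:ℝ) ≤ ‖z t - y t‖ := norm_nonneg _
      have hsq : ‖z t - y t‖ * ‖z t - y t‖ ≤ (h * eL) * (h * eL) :=
        mul_le_mul hzyb hzyb hn (hn.trans hzyb)
      calc M * ‖z t - y t‖ * ‖z t - y t‖ = M * (‖z t - y t‖ * ‖z t - y t‖) := by ring
        _ ≤ M * ((h * eL) * (h * eL)) := mul_le_mul_of_nonneg_left hsq hM
        _ = M * (h * eL) ^ 2 := by ring
    exact (norm_add_le _ _).trans (add_le_add hA1 hR2)
  have hwT := norm_le_gronwallBound_of_norm_deriv_right_le (δ := 0) hwcont hwd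
    (by rw [hw0]; simp) hbound3 T ⟨hT, le_rfl⟩
  have hgb : gronwallBound 0 L eps (T - t0) = eps * gB1 := by
    rw [hgB1def, ← hDldef, gronwallBound_linear]
  have final1 : ‖z T - y T‖ ≤ ‖dl T‖ + ‖w T‖ := by
    have hzw : z T - y T = dl T + w T := by
      show z T - y T = dl T + (z T - y T - dl T)
      abel
    rw [hzw]; exact norm_add_le _ _
  calc ‖z T - y T‖ ≤ ‖dl T‖ + ‖w T‖ := final1
    _ ≤ k * Real.exp (-lam * (T - t0)) * h + eps * gB1 :=
        add_le_add hdlT (le_of_le_of_eq (hwT) hgb)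
    _ = k * Real.exp (-lam * (T - t0)) * h + C * h^2 := by
        rw [hepsdef, hCdef]; ring

end Loc

/-- If a forward complete C² system `ẋ = f(t,x)` on ℝⁿ is contractive
(every solution of the linearized equation along any solution decays as
`‖δx(t)‖ ≤ k e^{-λ(t-t0)} ‖δx(t0)‖`), then it is incrementally exponentially stable. -/
theorem stmt_2 (n : ℕ)
    (f : ℝ → EuclideanSpace ℝ (Fin n) → EuclideanSpace ℝ (Fin n))
    (hf : ContDiff ℝ 2 (Function.uncurry f))
    (hcomplete : ∀ (t0 : ℝ) (x0 : EuclideanSpace ℝ (Fin n)),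
      ∃ x : ℝ → EuclideanSpace ℝ (Fin n), x t0 = x0 ∧
        ∀ t, t0 ≤ t → HasDerivAt x (f t (x t)) t)
    (k lam : ℝ) (hk : 0 < k) (hlam : 0 < lam)
    (hcontr : ∀ (t0 : ℝ) (x δ : ℝ → EuclideanSpace ℝ (Fin n)),
      (∀ t, t0 ≤ t → HasDerivAt x (f t (x t)) t) →
      (∀ t, t0 ≤ t → HasDerivAt δ ((fderiv ℝ (f t) (x t)) (δ t)) t) →
      ∀ t, t0 ≤ t → ‖δ t‖ ≤ k * Real.exp (-lam * (t - t0)) * ‖δ t0‖) :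
    ∀ (t0 : ℝ) (x1 x2 : ℝ → EuclideanSpace ℝ (Fin n)),
      (∀ t, t0 ≤ t → HasDerivAt x1 (f t (x1 t)) t) →
      (∀ t, t0 ≤ t → HasDerivAt x2 (f t (x2 t)) t) →
      ∀ t, t0 ≤ t →
        ‖x1 t - x2 t‖ ≤ k * Real.exp (-lam * (t - t0)) * ‖x1 t0 - x2 t0‖ := by
  intro t0 x1 x2 hx1 hx2 T hT
  classical
  set K := k * Real.exp (-lam * (T - t0)) with hKdef
  have hKpos : 0 < K := by positivity
  set a := x1 t0 with hadef
  set bb := x2 t0 with hbbdef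
  set d := ‖bb - a‖ with hddef
  have hd0 : 0 ≤ d := norm_nonneg _
  -- choose solutions from each initial point on the segment
  have hsolex : ∀ s : ℝ, ∃ x : ℝ → EuclideanSpace ℝ (Fin n),
      x t0 = a + s • (bb - a) ∧ ∀ t, t0 ≤ t → HasDerivAt x (f t (x t)) t :=
    fun s => hcomplete t0 _
  choose ysol hysol0 hysold using hsolex
  set G : ℝ → EuclideanSpace ℝ (Fin n) := fun s => ysol s T with hGdef
  -- uniqueness (from the local estimate with zero initial distance)
  have uniq : ∀ (y z : ℝ → EuclideanSpace ℝ (Fin n)),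
      (∀ t, t0 ≤ t → HasDerivAt y (f t (y t)) t) →
      (∀ t, t0 ≤ t → HasDerivAt z (f t (z t)) t) → z t0 = y t0 → z T = y T := by
    intro y z hy hz hinit
    obtain ⟨h0, hh0, C, hC, hest⟩ := loc_est hf hk hcontr t0 T hT y hy
    have h1 := hest z hz (by rw [hinit]; simp [hh0.le])
    rw [hinit] at h1
    simp only [sub_self, norm_zero, mul_zero, add_zero] at h1
    have h2 : ‖z T - y T‖ ≤ 0 := by simpa using h1
    have h3 := norm_le_zero_iff.mp h2
    exact sub_eq_zero.mp h3
  have hG0 : G 0 = x1 T := by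
    apply uniq x1 (ysol 0) hx1 (hysold 0)
    rw [hysol0 0]; simp [hadef]
  have hG1 : G 1 = x2 T := by
    apply uniq x2 (ysol 1) hx2 (hysold 1)
    rw [hysol0 1]; simp [hbbdef]
  have main : ∀ ε > 0, ‖G 1 - G 0‖ ≤ K * d + ε := by
    intro ε hε
    have hKdε : 0 ≤ K * d + ε := by positivity
    set S := {s : ℝ | s ∈ Icc (0:ℝ) 1 ∧ ‖G s - G 0‖ ≤ (K * d + ε) * s} with hSdef
    have hS0 : (0:ℝ) ∈ S := ⟨⟨le_rfl, zero_le_one⟩, by simp⟩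
    have hSbdd : BddAbove S := ⟨1, fun s hs => hs.1.2⟩
    have hSne : S.Nonempty := ⟨0, hS0⟩
    set σ := sSup S with hσdef
    have hσmem : σ ∈ Icc (0:ℝ) 1 :=
      ⟨le_csSup hSbdd hS0, csSup_le hSne (fun s hs => hs.1.2)⟩
    obtain ⟨h0, hh0, C, hC, hest⟩ := loc_est hf hk hcontr t0 T hT (ysol σ) (hysold σ)
    set η := min (h0 / (d + 1)) (ε / (C * (d + 1)^2 + 1)) with hηdef
    have hηpos : 0 < η := lt_min (by positivity) (by positivity)
    have est : ∀ s ∈ Icc (0:ℝ) 1, |s - σ| ≤ η →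
        ‖G s - G σ‖ ≤ (K * d + ε) * |s - σ| := by
      intro s hs hsσ
      have hinit : ‖ysol s t0 - ysol σ t0‖ = |s - σ| * d := by
        rw [hysol0 s, hysol0 σ]
        have hv : a + s • (bb - a) - (a + σ • (bb - a)) = (s - σ) • (bb - a) := by
          module
        rw [hv, norm_smul, Real.norm_eq_abs, hddef]
      have habs : 0 ≤ |s - σ| := abs_nonneg _
      have hinitle : ‖ysol s t0 - ysol σ t0‖ ≤ h0 := by
        rw [hinit]
        have hse : |s - σ| ≤ h0 / (d + 1) := hsσ.trans (min_le_left _ _)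
        calc |s - σ| * d ≤ (h0 / (d + 1)) * d :=
              mul_le_mul_of_nonneg_right hse hd0
          _ ≤ h0 := by
              rw [div_mul_eq_mul_div, div_le_iff₀ (by positivity)]
              nlinarith
      have h1 := hest (ysol s) (hysold s) hinitle
      rw [hinit] at h1
      refine h1.trans ?_
      have hη2 : η ≤ ε / (C * (d + 1)^2 + 1) := min_le_right _ _
      have key2 : C * (|s - σ| * d)^2 ≤ ε * |s - σ| := by
        have h3 : C * (|s - σ| * d)^2 = (C * d^2 * |s - σ|) * |s - σ| := by ring
        rw [h3]
        apply mul_le_mul_of_nonneg_right _ habs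
        have hD : (0:ℝ) < C * (d + 1)^2 + 1 := by positivity
        calc C * d^2 * |s - σ| ≤ C * d^2 * (ε / (C * (d + 1)^2 + 1)) := by
              apply mul_le_mul_of_nonneg_left (hsσ.trans hη2) (by positivity)
          _ ≤ (C * (d + 1)^2 + 1) * (ε / (C * (d + 1)^2 + 1)) := by
              apply mul_le_mul_of_nonneg_right _ (by positivity)
              nlinarith
          _ = ε := by field_simp
      calc K * (|s - σ| * d) + C * (|s - σ| * d)^2
          ≤ K * (|s - σ| * d) + ε * |s - σ| := by linarith
        _ = (K * d + ε) * |s - σ| := by ring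
    have hσS : σ ∈ S := by
      obtain ⟨s, hsS, hs⟩ := exists_lt_of_lt_csSup hSne (by linarith : σ - η < σ)
      have hsle : s ≤ σ := le_csSup hSbdd hsS
      refine ⟨hσmem, ?_⟩
      have habs : |s - σ| ≤ η := by
        rw [abs_of_nonpos (by linarith)]
        linarith
      have h2 := est s hsS.1 habs
      have tri := dist_triangle (G σ) (G s) (G 0)
      rw [dist_eq_norm, dist_eq_norm, dist_eq_norm] at tri
      have h4 : ‖G σ - G s‖ ≤ (K * d + ε) * (σ - s) := by
        rw [norm_sub_rev]
        refine h2.trans (le_of_eq ?_)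
        rw [abs_of_nonpos (by linarith), neg_sub]
      have h5 := hsS.2
      have e1 : (K * d + ε) * (σ - s) + (K * d + ε) * s = (K * d + ε) * σ := by ring
      linarith
    have hσ1 : σ = 1 := by
      by_contra hne
      have hσlt : σ < 1 := lt_of_le_of_ne hσmem.2 hne
      set s' := min (σ + η) 1 with hs'def
      have hs'mem : s' ∈ Icc (0:ℝ) 1 :=
        ⟨le_min (by linarith [hσmem.1]) zero_le_one, min_le_right _ _⟩
      have hs'gt : σ < s' := lt_min (by linarith) hσlt
      have habs : |s' - σ| ≤ η := by
        rw [abs_of_pos (by linarith)]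
        have := min_le_left (σ + η) 1
        rw [← hs'def] at this
        linarith
      have h2 := est s' hs'mem habs
      have tri := dist_triangle (G s') (G σ) (G 0)
      rw [dist_eq_norm, dist_eq_norm, dist_eq_norm] at tri
      have h4 : ‖G s' - G σ‖ ≤ (K * d + ε) * (s' - σ) := by
        refine h2.trans (le_of_eq ?_)
        rw [abs_of_pos (by linarith)]
      have h5 := hσS.2
      have e1 : (K * d + ε) * (s' - σ) + (K * d + ε) * σ = (K * d + ε) * s' := by ring
      have h6 : ‖G s' - G 0‖ ≤ (K * d + ε) * s' := by linarith
      have : s' ∈ S := ⟨hs'mem, h6⟩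
      have := le_csSup hSbdd this
      linarith
    have h7 := hσS.2
    rw [hσ1, mul_one] at h7
    exact h7
  have hfinal : ‖x2 T - x1 T‖ ≤ K * d := by
    apply le_of_forall_pos_le_add
    intro ε hε
    have := main ε hε
    rwa [hG1, hG0] at this
  calc ‖x1 T - x2 T‖ = ‖x2 T - x1 T‖ := norm_sub_rev _ _
    _ ≤ K * d := hfinal
    _ = K * ‖x1 t0 - x2 t0‖ := by rw [hddef, hadef, hbbdef, norm_sub_rev]
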